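/- For every point (x, y) ∈ ℝ² with x < 0 there exists a unique s ∈ [0,1) such that for some γ ∈ ℝ one has x = −(1 + s·cos γ)/√(1−s²) and y = (s·sin γ)/√(1−s²); moreover this unique s satisfies 1/√(1−s²) = (x² + y² + 1)/(−2x). -/

import Mathlib

set_option maxHeartbeats 800000

lemma stmt12_key (x y s : ℝ) (hx : x < 0) (hs0 : 0 ≤ s) (hs1 : s < 1)
    (γ : ℝ) (hxe : x = -(1 + s * Real.cos γ) / Real.sqrt (1 - s ^ 2))
    (hye : y = s * Real.sin γ / Real.sqrt (1 - s ^ 2)) :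
    (Real.sqrt (1 - s ^ 2))⁻¹ = (x ^ 2 + y ^ 2 + 1) / (-2 * x) := by
  have h1 : (0:ℝ) < 1 - s ^ 2 := by nlinarith
  set t := Real.sqrt (1 - s ^ 2) with htdef
  have ht : 0 < t := Real.sqrt_pos.2 h1
  have ht2 : t ^ 2 = 1 - s ^ 2 := Real.sq_sqrt h1.le
  have hc : Real.sin γ ^ 2 + Real.cos γ ^ 2 = 1 := Real.sin_sq_add_cos_sq γ
  have hxt : x * t = -(1 + s * Real.cos γ) := by
    rw [hxe]; field_simp
  have hyt : y * t = s * Real.sin γ := by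
    rw [hye]; field_simp
  have hx2 : (x * t) ^ 2 = (1 + s * Real.cos γ) ^ 2 := by rw [hxt]; ring
  have hy2 : (y * t) ^ 2 = (s * Real.sin γ) ^ 2 := by rw [hyt]
  have hmain : (x ^ 2 + y ^ 2 + 1) * t ^ 2 = -2 * x * t := by
    linear_combination hx2 + hy2 + ht2 + s ^ 2 * hc + 2 * hxt
  have hmain' : (x ^ 2 + y ^ 2 + 1) * t = -2 * x := by
    have h' : (x ^ 2 + y ^ 2 + 1) * t * t = -2 * x * t := by linear_combination hmain
    exact mul_right_cancel₀ ht.ne' h'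
  rw [eq_div_iff (by nlinarith : (-2:ℝ) * x ≠ 0)]
  rw [inv_mul_eq_div, div_eq_iff ht.ne']
  linarith [hmain']

lemma exists_cos_sin (a b : ℝ) (h : a ^ 2 + b ^ 2 = 1) :
    ∃ γ : ℝ, Real.cos γ = a ∧ Real.sin γ = b := by
  set z : ℂ := ⟨a, b⟩ with hz
  have hzabs : ‖z‖ = 1 := by
    rw [Complex.norm_def, hz, Complex.normSq_mk]
    rw [show a * a + b * b = 1 by nlinarith, Real.sqrt_one]
  have hz0 : z ≠ 0 := by
    intro hzz; rw [hzz] at hzabs; simp at hzabs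
  refine ⟨Complex.arg z, ?_, ?_⟩
  · rw [Complex.cos_arg hz0, hzabs, hz]; simp
  · rw [Complex.sin_arg, hzabs, hz]; simp

theorem stmt12 (x y : ℝ) (hx : x < 0) :
    (∃! s : ℝ, (0 ≤ s ∧ s < 1) ∧ ∃ γ : ℝ,
        x = -(1 + s * Real.cos γ) / Real.sqrt (1 - s ^ 2) ∧
        y = s * Real.sin γ / Real.sqrt (1 - s ^ 2)) ∧
    (∀ s : ℝ, (0 ≤ s ∧ s < 1) →
      (∃ γ : ℝ,
        x = -(1 + s * Real.cos γ) / Real.sqrt (1 - s ^ 2) ∧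
        y = s * Real.sin γ / Real.sqrt (1 - s ^ 2)) →
      (Real.sqrt (1 - s ^ 2))⁻¹ = (x ^ 2 + y ^ 2 + 1) / (-2 * x)) := by
  have key : ∀ s : ℝ, (0 ≤ s ∧ s < 1) →
      (∃ γ : ℝ,
        x = -(1 + s * Real.cos γ) / Real.sqrt (1 - s ^ 2) ∧
        y = s * Real.sin γ / Real.sqrt (1 - s ^ 2)) →
      (Real.sqrt (1 - s ^ 2))⁻¹ = (x ^ 2 + y ^ 2 + 1) / (-2 * x) := by
    rintro s ⟨hs0, hs1⟩ ⟨γ, hxe, hye⟩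
    exact stmt12_key x y s hx hs0 hs1 γ hxe hye
  refine ⟨?_, key⟩
  obtain ⟨D, hD⟩ : ∃ D : ℝ, D = x ^ 2 + y ^ 2 + 1 := ⟨_, rfl⟩
  have hD0 : 0 < D := by rw [hD]; positivity
  obtain ⟨t, htdef⟩ : ∃ t : ℝ, t = -2 * x / D := ⟨_, rfl⟩
  have ht0 : 0 < t := htdef ▸ div_pos (by linarith) hD0
  have ht1 : t ≤ 1 := by
    rw [htdef, div_le_one hD0, hD]
    nlinarith [sq_nonneg (x + 1)]
  obtain ⟨s, hsdef⟩ : ∃ s : ℝ, s = Real.sqrt (1 - t ^ 2) := ⟨_, rfl⟩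
  have hst : s ^ 2 = 1 - t ^ 2 := by
    rw [hsdef]; exact Real.sq_sqrt (by nlinarith)
  have hs0 : 0 ≤ s := hsdef ▸ Real.sqrt_nonneg _
  have hs1 : s < 1 := by nlinarith [sq_nonneg s]
  have hsqrt : Real.sqrt (1 - s ^ 2) = t := by
    rw [hst]
    have h : 1 - (1 - t ^ 2) = t ^ 2 := by ring
    rw [h, Real.sqrt_sq ht0.le]
  have hs2 : s ^ 2 = (x * t + 1) ^ 2 + (y * t) ^ 2 := by
    rw [hst, htdef, hD]
    have hDne : x ^ 2 + y ^ 2 + 1 ≠ 0 := by positivity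
    field_simp
    ring
  refine ⟨s, ⟨⟨hs0, hs1⟩, ?_⟩, ?_⟩
  · by_cases hs : s = 0
    · have h0 : (x * t + 1) ^ 2 + (y * t) ^ 2 = 0 := by rw [← hs2, hs]; ring
      have hx1 : x * t = -1 := by nlinarith [sq_nonneg (x * t + 1), sq_nonneg (y * t)]
      have hy0 : y * t = 0 := by nlinarith [sq_nonneg (x * t + 1), sq_nonneg (y * t)]
      have ht1' : t = 1 := by
        have : t ^ 2 = 1 := by rw [hs] at hst; nlinarith
        nlinarith
      have hxm1 : x = -1 := by rw [ht1'] at hx1; linarith [hx1]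
      have hy : y = 0 := by rw [ht1'] at hy0; linarith [hy0]
      refine ⟨0, ?_, ?_⟩
      · rw [hsqrt, ht1', hs, hxm1]; norm_num
      · rw [hsqrt, ht1', hs, hy]; norm_num
    · have hs' : 0 < s := lt_of_le_of_ne hs0 (Ne.symm hs)
      have hab : ((-(x * t) - 1) / s) ^ 2 + (y * t / s) ^ 2 = 1 := by
        rw [div_pow, div_pow, ← add_div,
          div_eq_one_iff_eq (pow_ne_zero 2 hs'.ne')]
        linear_combination -hs2
      obtain ⟨γ, hcos, hsin⟩ := exists_cos_sin ((-(x * t) - 1) / s) (y * t / s) hab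
      have hsa : s * ((-(x * t) - 1) / s) = -(x * t) - 1 := by field_simp
      have hsb : s * (y * t / s) = y * t := by field_simp
      refine ⟨γ, ?_, ?_⟩
      · rw [hsqrt, hcos, hsa]
        field_simp
        ring
      · rw [hsqrt, hsin, hsb]
        field_simp
  · rintro s' ⟨⟨hs'0, hs'1⟩, hγ'⟩
    have h1 := key s' ⟨hs'0, hs'1⟩ hγ'
    have h2 : (Real.sqrt (1 - s ^ 2))⁻¹ = (x ^ 2 + y ^ 2 + 1) / (-2 * x) := by
      rw [hsqrt, htdef, inv_div, hD]
    have hpos : (0:ℝ) < 1 - s' ^ 2 := by nlinarith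
    have heq : Real.sqrt (1 - s' ^ 2) = Real.sqrt (1 - s ^ 2) := by
      have := h1.trans h2.symm
      exact inv_injective this
    have heq2 : 1 - s' ^ 2 = 1 - s ^ 2 := by
      have e1 := Real.sq_sqrt hpos.le
      have e2 := Real.sq_sqrt (by nlinarith : (0:ℝ) ≤ 1 - s ^ 2)
      rw [← e1, ← e2, heq]
    nlinarith
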